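/- arXiv:1003.4835 — 4 statements merged into one kernel-verified Lean document; each statement's English description precedes it below -/
import Mathlib

section
/- For p ∈ ℝ \ {0}, let P₂(p) := {((p+i)x, (p+i)y) : x, y ∈ ℝ} ⊂ ℂ², and let ℝ² := {(x,y) ∈ ℂ² : x, y ∈ ℝ}. There exists no invertible ℂ-linear map T : ℂ² → ℂ² such that T(ℝ²) = {(z,w) ∈ ℂ² : w = z̄} and T(P₂(p)) = {(z,w) ∈ ℂ² : w = r·z̄ + ρ·z} for some r, ρ ∈ ℝ with r ≠ 0 and (r,ρ) ≠ (1,0). -/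
open Complex Metric Set

def R2set : Set (ℂ × ℂ) := {v : ℂ × ℂ | v.1.im = 0 ∧ v.2.im = 0}

def P2 (p : ℝ) : Set (ℂ × ℂ) :=
  {v : ℂ × ℂ | ∃ x y : ℝ, v = (((p : ℂ) + Complex.I) * (x : ℂ), ((p : ℂ) + Complex.I) * (y : ℂ))}

def Graph1 : Set (ℂ × ℂ) := {v : ℂ × ℂ | v.2 = (starRingEnd ℂ) v.1}

def Graph2 (r ρ : ℝ) : Set (ℂ × ℂ) :=
  {v : ℂ × ℂ | v.2 = (r : ℂ) * (starRingEnd ℂ) v.1 + (ρ : ℂ) * v.1}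

/-- no invertible ℂ-linear map of ℂ² sends ℝ² to {w = z̄} and
P₂(p) to {w = r z̄ + ρ z} with r, ρ real, r ≠ 0, (r,ρ) ≠ (1,0). -/
theorem no_linear_normalization_of_pair (p : ℝ) (hp : p ≠ 0) :
    ¬ ∃ (T : (ℂ × ℂ) ≃ₗ[ℂ] (ℂ × ℂ)) (r ρ : ℝ),
      r ≠ 0 ∧ (r, ρ) ≠ ((1 : ℝ), (0 : ℝ)) ∧
      (⇑T) '' R2set = Graph1 ∧ (⇑T) '' (P2 p) = Graph2 r ρ := by
  rintro ⟨T, r, ρ, hr, hrρ, h1, h2⟩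
  set l : ℂ := (p : ℂ) + Complex.I with hl
  -- scaling a real point by l lands in P2 p
  have key : ∀ u : ℂ × ℂ, u ∈ R2set → l • u ∈ P2 p := by
    rintro ⟨a, b⟩ ⟨ha, hb⟩
    refine ⟨a.re, b.re, ?_⟩
    have ha' : ((a.re : ℝ) : ℂ) = a := Complex.ext (by simp) (by simpa using ha.symm)
    have hb' : ((b.re : ℝ) : ℂ) = b := Complex.ext (by simp) (by simpa using hb.symm)
    simp [Prod.smul_mk, smul_eq_mul, ha', hb', hl]
  -- two points of Graph1, pulled back through T
  have h11 : ((1 : ℂ), (1 : ℂ)) ∈ Graph1 := by simp [Graph1]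
  have hII : ((Complex.I), -Complex.I) ∈ Graph1 := by simp [Graph1]
  rw [← h1] at h11 hII
  obtain ⟨u, hu, hTu⟩ := h11
  obtain ⟨u', hu', hTu'⟩ := hII
  have m1 : T (l • u) ∈ Graph2 r ρ := h2 ▸ ⟨l • u, key u hu, rfl⟩
  have m2 : T (l • u') ∈ Graph2 r ρ := h2 ▸ ⟨l • u', key u' hu', rfl⟩
  rw [map_smul, hTu] at m1
  rw [map_smul, hTu'] at m2
  simp only [Graph2, Set.mem_setOf_eq, Prod.smul_mk, smul_eq_mul, mul_one] at m1 m2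
  -- turn the two complex equations into real ones
  have c1 := congrArg Complex.re m1
  have c2 := congrArg Complex.im m1
  have c3 := congrArg Complex.re m2
  have c4 := congrArg Complex.im m2
  simp [hl, Complex.ext_iff, Complex.add_re, Complex.add_im, Complex.mul_re,
    Complex.mul_im, map_add, Complex.conj_I, Complex.conj_ofReal] at c1 c2 c3 c4
  -- c2 : 1 = -r + ρ ; c3 : ... ; derive ρ = 0, r = -1, then p = 0
  have hρ0 : ρ = 0 := by nlinarith [c1, c2, c3, c4]
  have hrm1 : r = -1 := by nlinarith [c1, c2, c3, c4]
  have : p = 0 := by nlinarith [c1, c2, c3, c4]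
  exact hp this
end

section
/- For p ∈ ℝ \ {0}, let P₂(p) := {((p+i)x, (p+i)y) : x, y ∈ ℝ} ⊂ ℂ², and let ℝ² := {(x,y) ∈ ℂ² : x, y ∈ ℝ}. There exists no invertible ℂ-linear map T : ℂ² → ℂ² such that T(P₂(p)) = {(z,w) ∈ ℂ² : w = z̄} and T(ℝ²) = {(z,w) ∈ ℂ² : w = r·z̄ + ρ·z} for some r, ρ ∈ ℝ with r ≠ 0 and (r,ρ) ≠ (1,0). -/
open Complex Metric Set

lemma key_step (p r ρ : ℝ) (T : (ℂ × ℂ) ≃ₗ[ℂ] (ℂ × ℂ))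
    (hP : (⇑T) '' (P2 p) = Graph1) (hR : (⇑T) '' R2set = Graph2 r ρ)
    (w : ℂ × ℂ) (hw : w ∈ Graph2 r ρ) :
    (((p : ℂ) + Complex.I) • w) ∈ Graph1 := by
  rw [← hR] at hw
  obtain ⟨v, hv, hTv⟩ := hw
  have hmem : (((p : ℂ) + Complex.I) • v) ∈ P2 p := by
    refine ⟨v.1.re, v.2.re, ?_⟩
    obtain ⟨h1, h2⟩ := hv
    apply Prod.ext <;> simp [Complex.ext_iff, h1, h2]
  have : T (((p : ℂ) + Complex.I) • v) ∈ Graph1 := by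
    rw [← hP]; exact ⟨_, hmem, rfl⟩
  rwa [map_smul, hTv] at this

/-- no invertible ℂ-linear map of ℂ² sends P₂(p) to {w = z̄} and
ℝ² to {w = r z̄ + ρ z} with r, ρ real, r ≠ 0, (r,ρ) ≠ (1,0). -/
theorem no_linear_normalization_of_pair_swapped (p : ℝ) (hp : p ≠ 0) :
    ¬ ∃ (T : (ℂ × ℂ) ≃ₗ[ℂ] (ℂ × ℂ)) (r ρ : ℝ),
      r ≠ 0 ∧ (r, ρ) ≠ ((1 : ℝ), (0 : ℝ)) ∧
      (⇑T) '' (P2 p) = Graph1 ∧ (⇑T) '' R2set = Graph2 r ρ := by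
  rintro ⟨T, r, ρ, hr, hrρ, hP, hR⟩
  have h1 : ((1 : ℂ), (r : ℂ) + ρ) ∈ Graph2 r ρ := by simp [Graph2]
  have h2 : (Complex.I, ((ρ : ℂ) - r) * Complex.I) ∈ Graph2 r ρ := by
    simp [Graph2]; ring
  have e1 := key_step p r ρ T hP hR _ h1
  have e2 := key_step p r ρ T hP hR _ h2
  simp only [Graph1, Prod.smul_fst, Prod.smul_snd, smul_eq_mul, Set.mem_setOf_eq] at e1 e2
  rw [Complex.ext_iff] at e1 e2
  simp [Complex.ext_iff, mul_comm, mul_assoc, mul_add, add_mul] at e1 e2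
  obtain ⟨e1a, e1b⟩ := e1
  obtain ⟨e2a, e2b⟩ := e2
  apply hp
  nlinarith [e1a, e1b, e2a, e2b]
end

section
/- For every p ∈ ℝ \ {0}, the set P₂(p) := {((p+i)x, (p+i)y) : x, y ∈ ℝ} ⊂ ℂ² is a totally-real plane, P₂(p) ∩ ℝ² = {0} where ℝ² := {(x,y) ∈ ℂ² : x, y ∈ ℝ}, and ℝ² ∪ P₂(p) is locally polynomially convex at the origin. -/
open Complex Metric Set

noncomputable def pEval (P : MvPolynomial (Fin 2) ℂ) (z : ℂ × ℂ) : ℂ :=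
  MvPolynomial.eval ![z.1, z.2] P

def PolyConvex (K : Set (ℂ × ℂ)) : Prop :=
  {z : ℂ × ℂ | ∀ P : MvPolynomial (Fin 2) ℂ,
      ‖pEval P z‖ ≤ ⨆ w ∈ K, ‖pEval P w‖} = K

def LocPolyConvexAt (X : Set (ℂ × ℂ)) (p : ℂ × ℂ) : Prop :=
  ∃ r > 0, ∀ ρ : ℝ, 0 < ρ → ρ ≤ r → PolyConvex (X ∩ closedBall p ρ)

def TotallyRealSub (T : Submodule ℝ (ℂ × ℂ)) : Prop :=
  ∀ v ∈ T, Complex.I • v ∈ T → v = 0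

def IsTangentAt (k : ℕ∞) (S : Set (ℂ × ℂ)) (p : ℂ × ℂ) (T : Submodule ℝ (ℂ × ℂ)) : Prop :=
  ∃ (U : Set (ℝ × ℝ)) (f : ℝ × ℝ → ℂ × ℂ) (u : ℝ × ℝ),
    IsOpen U ∧ u ∈ U ∧ f u = p ∧
    ContDiffOn ℝ k f U ∧ Set.InjOn f U ∧
    (∀ v ∈ U, Function.Injective (fderiv ℝ f v)) ∧
    (∃ V ∈ nhds p, S ∩ V = (f '' U) ∩ V) ∧
    T = LinearMap.range ((fderiv ℝ f u) : (ℝ × ℝ) →ₗ[ℝ] (ℂ × ℂ))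

def IsCkSurface (k : ℕ∞) (S : Set (ℂ × ℂ)) : Prop :=
  ∀ p ∈ S, ∃ T, IsTangentAt k S p T

def IsTotallyRealCkSurface (k : ℕ∞) (S : Set (ℂ × ℂ)) : Prop :=
  ∀ p ∈ S, ∃ T, IsTangentAt k S p T ∧ TotallyRealSub T

def IsTotallyRealPlane (M : Submodule ℝ (ℂ × ℂ)) : Prop :=
  Module.finrank ℝ M = 2 ∧ TotallyRealSub M

lemma real_biSup_le {K : Set (ℂ × ℂ)} {g : ℂ × ℂ → ℝ} {a : ℝ} (ha : 0 ≤ a)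
    (h : ∀ w ∈ K, g w ≤ a) : (⨆ w ∈ K, g w) ≤ a :=
  Real.iSup_le (fun w => Real.iSup_le (fun hw => h w hw) ha) ha

lemma le_real_biSup {K : Set (ℂ × ℂ)} {g : ℂ × ℂ → ℝ}
    (hb : BddAbove (Set.range fun w => ⨆ _ : w ∈ K, g w)) {z : ℂ × ℂ} (hz : z ∈ K) :
    g z ≤ ⨆ w ∈ K, g w := by
  have h1 : (⨆ _ : z ∈ K, g z) = g z := ciSup_pos hz
  calc g z = ⨆ _ : z ∈ K, g z := h1.symm
    _ ≤ ⨆ w ∈ K, g w := le_ciSup hb z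

-- tail bound for exp
lemma exp_tail {x : ℂ} (hx : ‖x‖ ≤ 1) {N : ℕ} (hN : 0 < N) :
    ‖Complex.exp x - ∑ k ∈ Finset.range N, x ^ k / k.factorial‖ ≤
      (N + 1 : ℝ) * ((N.factorial : ℝ) * N)⁻¹ := by
  have := Complex.exp_bound (x := x) hx hN
  calc ‖Complex.exp x - ∑ k ∈ Finset.range N, x ^ k / k.factorial‖
      ≤ ‖x‖ ^ N * (N.succ * ((N.factorial : ℝ) * N)⁻¹) := this
    _ ≤ 1 * ((N + 1 : ℝ) * ((N.factorial : ℝ) * N)⁻¹) := by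
        apply mul_le_mul _ (le_of_eq (by push_cast; ring)) _ zero_le_one
        · exact pow_le_one₀ (norm_nonneg x) hx
        · positivity
    _ = (N + 1 : ℝ) * ((N.factorial : ℝ) * N)⁻¹ := one_mul _

lemma lemA {K : Set (ℂ × ℂ)} {z : ℂ × ℂ}
    (hz : ∀ P : MvPolynomial (Fin 2) ℂ, ‖pEval P z‖ ≤ ⨆ w ∈ K, ‖pEval P w‖)
    (Q : MvPolynomial (Fin 2) ℂ) (β : ℂ)
    (hK : ∀ w ∈ K, 0 ≤ (β * pEval Q w).re ∧ ‖β * pEval Q w‖ ≤ 1)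
    (hzb : ‖β * pEval Q z‖ ≤ 1) : 0 ≤ (β * pEval Q z).re := by
  by_contra hneg
  push_neg at hneg
  -- for each N, consider the polynomial partial sum of exp(-β Q)
  have key : ∀ N : ℕ, 0 < N →
      Real.exp (-(β * pEval Q z)).re ≤ 1 + 2 * ((N + 1 : ℝ) * ((N.factorial : ℝ) * N)⁻¹) := by
    intro N hN
    set εN : ℝ := (N + 1 : ℝ) * ((N.factorial : ℝ) * N)⁻¹ with hεN
    have hεN0 : 0 ≤ εN := by positivity
    set PN : MvPolynomial (Fin 2) ℂ :=
      ∑ k ∈ Finset.range N, MvPolynomial.C ((-β) ^ k / k.factorial) * Q ^ k with hPN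
    have hev : ∀ w : ℂ × ℂ,
        pEval PN w = ∑ k ∈ Finset.range N, (-(β * pEval Q w)) ^ k / k.factorial := by
      intro w
      rw [pEval, hPN, map_sum]
      apply Finset.sum_congr rfl
      intro k _
      rw [map_mul, MvPolynomial.eval_C, map_pow]
      show (-β) ^ k / k.factorial * (pEval Q w) ^ k = _
      rw [neg_mul_eq_neg_mul, mul_pow]
      ring
    have hband : ∀ w ∈ K, ‖pEval PN w‖ ≤ 1 + εN := by
      intro w hw
      obtain ⟨h1, h2⟩ := hK w hw
      have hx : ‖-(β * pEval Q w)‖ ≤ 1 := by rwa [norm_neg]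
      have htail := exp_tail hx hN
      have hexp : ‖Complex.exp (-(β * pEval Q w))‖ ≤ 1 := by
        rw [Complex.norm_exp]
        have : (-(β * pEval Q w)).re ≤ 0 := by simpa using h1
        calc Real.exp _ ≤ Real.exp 0 := Real.exp_le_exp.2 this
          _ = 1 := Real.exp_zero
      calc ‖pEval PN w‖
          = ‖Complex.exp (-(β * pEval Q w)) -
              (Complex.exp (-(β * pEval Q w)) - pEval PN w)‖ := by ring_nf
        _ ≤ ‖Complex.exp (-(β * pEval Q w))‖ +
              ‖Complex.exp (-(β * pEval Q w)) - pEval PN w‖ := norm_sub_le _ _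
        _ ≤ 1 + εN := by
            apply add_le_add hexp
            rw [hev w]; exact htail
    have hbig : Real.exp (-(β * pEval Q z)).re - εN ≤ ‖pEval PN z‖ := by
      have hx : ‖-(β * pEval Q z)‖ ≤ 1 := by rwa [norm_neg]
      have htail := exp_tail hx hN
      have : ‖Complex.exp (-(β * pEval Q z))‖ - ‖pEval PN z‖ ≤ εN := by
        calc ‖Complex.exp (-(β * pEval Q z))‖ - ‖pEval PN z‖
            ≤ ‖Complex.exp (-(β * pEval Q z)) - pEval PN z‖ := by
              exact norm_sub_norm_le _ _
          _ ≤ εN := by rw [hev z]; exact htail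
      rw [Complex.norm_exp] at this
      linarith
    have := hz PN
    have hsup : (⨆ w ∈ K, ‖pEval PN w‖) ≤ 1 + εN :=
      real_biSup_le (by linarith) hband
    linarith
  -- now let N → ∞
  set a : ℝ := Real.exp (-(β * pEval Q z)).re with ha
  have ha1 : 1 < a := by
    rw [ha, show (1:ℝ) = Real.exp 0 from Real.exp_zero.symm]
    apply Real.exp_lt_exp.2
    simpa using hneg
  obtain ⟨N, hNgt⟩ := exists_nat_gt (4 / (a - 1))
  have hN0 : 0 < N := by
    by_contra h
    push_neg at h
    interval_cases N
    · have : 0 < 4 / (a - 1) := div_pos (by norm_num) (by linarith)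
      simp at hNgt
      linarith
  have hfac : (N : ℝ) ≤ N.factorial := by exact_mod_cast Nat.self_le_factorial N
  have hεsmall : 2 * ((N + 1 : ℝ) * ((N.factorial : ℝ) * N)⁻¹) ≤ 4 / N := by
    have hNpos : (0:ℝ) < N := by exact_mod_cast hN0
    have hfacpos : (0:ℝ) < N.factorial := by positivity
    rw [div_eq_mul_inv]
    have hN1 : (1:ℝ) ≤ N := by exact_mod_cast hN0
    have h1 : (N + 1 : ℝ) ≤ 2 * N := by linarith
    have h2 : ((N.factorial : ℝ) * N)⁻¹ ≤ ((N:ℝ) * N)⁻¹ := by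
      apply inv_anti₀ (by positivity)
      exact mul_le_mul_of_nonneg_right hfac (le_of_lt hNpos)
    calc 2 * ((N + 1 : ℝ) * ((N.factorial : ℝ) * N)⁻¹)
        ≤ 2 * ((2 * N) * ((N:ℝ) * N)⁻¹) := by
          apply mul_le_mul_of_nonneg_left _ (by norm_num)
          apply mul_le_mul h1 h2 (by positivity) (by positivity)
      _ = 4 * (N:ℝ)⁻¹ := by field_simp; ring
  have := key N hN0
  have h4N : 4 / (N:ℝ) < a - 1 := by
    have hNpos : (0:ℝ) < N := by exact_mod_cast hN0
    rw [div_lt_iff₀ hNpos]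
    have : 4 / (a - 1) < N := hNgt
    rw [div_lt_iff₀ (by linarith)] at this
    linarith [this]
  linarith

/-- Cone duality -/
lemma lemD {d b : ℂ} (hd : d.im ≠ 0)
    (H : ∀ β : ℂ, 0 ≤ β.re → 0 ≤ (β * d).re → 0 ≤ (β * b).re) :
    ∃ s t : ℝ, 0 ≤ s ∧ 0 ≤ t ∧ b = (s : ℂ) + (t : ℂ) * d := by
  set σ : ℝ := if 0 < d.im then 1 else -1 with hσ
  have hσd : σ * d.im = |d.im| := by
    rcases lt_or_gt_of_ne hd with h | h
    · rw [hσ, if_neg (by linarith), abs_of_neg h]; ring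
    · rw [hσ, if_pos h, abs_of_pos h]; ring
  have hA : 0 < |d.im| := abs_pos.2 hd
  set t : ℝ := b.im / d.im with htdef
  set s : ℝ := b.re - t * d.re with hsdef
  have hbre : b.re = s + t * d.re := by rw [hsdef]; ring
  have hbim : b.im = t * d.im := by rw [htdef]; field_simp
  have hb : b = (s : ℂ) + (t : ℂ) * d := by
    apply Complex.ext <;> simp [Complex.mul_re, Complex.mul_im, hbre, hbim]
  have ht : 0 ≤ t := by
    by_contra ht
    push_neg at ht
    set ε : ℝ := min (|d.im| / (1 + |d.re|)) ((-t) * |d.im| / (2 * (1 + |b.re|))) with hε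
    have hε0 : 0 < ε := by
      apply lt_min
      · positivity
      · have : 0 < -t := by linarith
        positivity
    have hε1 : ε * (1 + |d.re|) ≤ |d.im| := by
      have := min_le_left (|d.im| / (1 + |d.re|)) ((-t) * |d.im| / (2 * (1 + |b.re|)))
      rw [← hε] at this
      rw [← le_div_iff₀ (by positivity)]
      exact this
    have hε2 : ε * (1 + |b.re|) ≤ (-t) * |d.im| / 2 := by
      have := min_le_right (|d.im| / (1 + |d.re|)) ((-t) * |d.im| / (2 * (1 + |b.re|)))
      rw [← hε] at this
      rw [← le_div_iff₀ (by positivity)]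
      calc ε ≤ (-t) * |d.im| / (2 * (1 + |b.re|)) := this
        _ = (-t) * |d.im| / 2 / (1 + |b.re|) := (div_div _ _ _).symm
    set β : ℂ := ⟨ε, -σ⟩ with hβ
    have h1 : 0 ≤ β.re := le_of_lt hε0
    have h2 : 0 ≤ (β * d).re := by
      have : (β * d).re = ε * d.re + σ * d.im := by
        simp [hβ, Complex.mul_re]; try ring
      rw [this, hσd]
      have h3 : ε * |d.re| ≤ |d.im| := by nlinarith [abs_nonneg d.re]
      have h4 : -(ε * d.re) ≤ ε * |d.re| := by
        have := neg_abs_le d.re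
        nlinarith
      linarith
    have h3 : (β * b).re < 0 := by
      have he : (β * b).re = ε * b.re + σ * b.im := by
        simp [hβ, Complex.mul_re]; try ring
      rw [he, hbim, show σ * (t * d.im) = t * (σ * d.im) by ring, hσd]
      have h5 : ε * b.re ≤ ε * |b.re| := by
        have := le_abs_self b.re
        nlinarith
      nlinarith [abs_nonneg b.re]
    have := H β h1 h2
    linarith
  refine ⟨s, t, ?_, ht, hb⟩
  by_contra hs
  push_neg at hs
  set u : ℝ := s * d.re + t * (d.re ^ 2 + d.im ^ 2) with hu
  set ε : ℝ := min (|d.im| / (1 + |d.re|)) ((-s) * |d.im| / (2 * (1 + |u|))) with hε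
  have hε0 : 0 < ε := by
    apply lt_min
    · positivity
    · have : 0 < -s := by linarith
      positivity
  have hε1 : ε * (1 + |d.re|) ≤ |d.im| := by
    have := min_le_left (|d.im| / (1 + |d.re|)) ((-s) * |d.im| / (2 * (1 + |u|)))
    rw [← hε] at this
    rw [← le_div_iff₀ (by positivity)]
    exact this
  have hε2 : ε * (1 + |u|) ≤ (-s) * |d.im| / 2 := by
    have := min_le_right (|d.im| / (1 + |d.re|)) ((-s) * |d.im| / (2 * (1 + |u|)))
    rw [← hε] at this
    rw [← le_div_iff₀ (by positivity)]
    calc ε ≤ (-s) * |d.im| / (2 * (1 + |u|)) := this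
      _ = (-s) * |d.im| / 2 / (1 + |u|) := (div_div _ _ _).symm
  set β : ℂ := ⟨ε * d.re + σ * d.im, σ * d.re - ε * d.im⟩ with hβ
  have h1 : 0 ≤ β.re := by
    have : β.re = ε * d.re + σ * d.im := rfl
    rw [this, hσd]
    have h3 : ε * |d.re| ≤ |d.im| := by nlinarith [abs_nonneg d.re]
    have h4 : -(ε * d.re) ≤ ε * |d.re| := by
      have := neg_abs_le d.re
      nlinarith
    linarith
  have h2 : 0 ≤ (β * d).re := by
    have : (β * d).re = ε * (d.re ^ 2 + d.im ^ 2) := by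
      simp [hβ, Complex.mul_re]; try ring
    rw [this]
    positivity
  have h3 : (β * b).re < 0 := by
    have he : (β * b).re = ε * u + σ * d.im * s := by
      simp [hβ, Complex.mul_re, hbre, hbim, hu]; try ring
    rw [he, show σ * d.im * s = s * (σ * d.im) by ring, hσd]
    have h5 : ε * u ≤ ε * |u| := by
      have := le_abs_self u
      nlinarith
    nlinarith [abs_nonneg u]
  have := H β h1 h2
  linarith

lemma polar_im (r x : ℝ) : ((r : ℂ) * Complex.exp ((x : ℂ) * I)).im = r * Real.sin x := by
  rw [Complex.mul_im, Complex.ofReal_re, Complex.ofReal_im, Complex.exp_ofReal_mul_I_im]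
  ring

lemma pow_polar (w : ℂ) (k : ℕ) :
    w ^ k = ((‖w‖ ^ k : ℝ) : ℂ) * Complex.exp ((((k : ℝ) * w.arg : ℝ) : ℂ) * I) := by
  conv_lhs => rw [← Complex.norm_mul_exp_arg_mul_I w]
  rw [mul_pow, ← Complex.exp_nat_mul]
  push_cast
  ring_nf

lemma conj_polar (r x : ℝ) :
    (starRingEnd ℂ) ((r : ℂ) * Complex.exp ((x : ℂ) * I)) =
      (r : ℂ) * Complex.exp (((-x : ℝ) : ℂ) * I) := by
  rw [map_mul, Complex.conj_ofReal, ← Complex.exp_conj]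
  congr 1
  simp

lemma polar_mul_im (r1 x1 r2 x2 : ℝ) :
    (((r1 : ℂ) * Complex.exp ((x1 : ℂ) * I)) * ((r2 : ℂ) * Complex.exp ((x2 : ℂ) * I))).im =
      (r1 * r2) * Real.sin (x1 + x2) := by
  have h : ((r1 : ℂ) * Complex.exp ((x1 : ℂ) * I)) * ((r2 : ℂ) * Complex.exp ((x2 : ℂ) * I)) =
      ((r1 * r2 : ℝ) : ℂ) * Complex.exp (((x1 + x2 : ℝ) : ℂ) * I) := by
    rw [mul_mul_mul_comm, ← Complex.exp_add]
    push_cast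
    ring_nf
  rw [h, polar_im]

set_option maxHeartbeats 1000000 in
lemma lemB_pos {d b : ℂ} (hd : 0 < d.im)
    (H : ∀ n : ℕ, 0 < n → ∀ β : ℂ, 0 ≤ β.re → 0 ≤ (β * d ^ n).re → 0 ≤ (β * b ^ n).re) :
    (∃ s : ℝ, 0 ≤ s ∧ b = (s : ℂ)) ∨ (∃ t : ℝ, 0 ≤ t ∧ b = (t : ℂ) * d) := by
  have hd0 : d ≠ 0 := by
    intro h
    rw [h] at hd
    simp at hd
  obtain ⟨s, t, hs, ht, hb⟩ := lemD (ne_of_gt hd) (fun β h1 h2 => by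
    have := H 1 one_pos β h1 (by rwa [pow_one])
    rwa [pow_one] at this)
  rcases eq_or_lt_of_le ht with ht0 | htpos
  · left
    exact ⟨s, hs, by rw [hb, ← ht0]; simp⟩
  rcases eq_or_lt_of_le hs with hs0 | hspos
  · right
    exact ⟨t, ht, by rw [hb, ← hs0]; simp⟩
  exfalso
  have hbim : b.im = t * d.im := by rw [hb]; simp [Complex.add_im, Complex.mul_im]
  have hbre : b.re = s + t * d.re := by rw [hb]; simp [Complex.add_re, Complex.mul_re]
  have hbimpos : 0 < b.im := by rw [hbim]; positivity
  have hb0 : b ≠ 0 := by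
    intro h
    rw [h] at hbimpos
    simp at hbimpos
  set θ : ℝ := d.arg with hθdef
  set φ : ℝ := b.arg with hφdef
  have hθpos : 0 < θ := by
    rcases lt_or_eq_of_le (Complex.arg_nonneg_iff.2 (le_of_lt hd)) with h | h
    · exact h
    · exfalso
      have := Complex.arg_eq_zero_iff.1 h.symm
      exact absurd this.2 (ne_of_gt hd)
  have hθltπ : θ < Real.pi := by
    rcases lt_or_eq_of_le (Complex.arg_le_pi d) with h | h
    · exact h
    · exfalso
      have := Complex.arg_eq_pi_iff.1 h
      exact absurd this.2 (ne_of_gt hd)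
  have hφpos : 0 < φ := by
    rcases lt_or_eq_of_le (Complex.arg_nonneg_iff.2 (le_of_lt hbimpos)) with h | h
    · exact h
    · exfalso
      have := Complex.arg_eq_zero_iff.1 h.symm
      exact absurd this.2 (ne_of_gt hbimpos)
  have hφltπ : φ < Real.pi := by
    rcases lt_or_eq_of_le (Complex.arg_le_pi b) with h | h
    · exact h
    · exfalso
      have := Complex.arg_eq_pi_iff.1 h
      exact absurd this.2 (ne_of_gt hbimpos)
  have habsd : 0 < ‖d‖ := norm_pos_iff.mpr hd0
  have habsb : 0 < ‖b‖ := norm_pos_iff.mpr hb0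
  -- φ < θ
  have hφθ : φ < θ := by
    have him : ((starRingEnd ℂ) d * b).im = ‖d‖ * ‖b‖ *
        Real.sin (-θ + φ) := by
      conv_lhs => rw [← Complex.norm_mul_exp_arg_mul_I d, ← Complex.norm_mul_exp_arg_mul_I b]
      rw [conj_polar, polar_mul_im]
    have him2 : ((starRingEnd ℂ) d * b).im = -s * d.im := by
      simp only [Complex.mul_im, Complex.conj_re, Complex.conj_im, hbre, hbim]
      ring
    have heq : ‖d‖ * ‖b‖ * Real.sin (-θ + φ) = -s * d.im := by
      rw [← him, him2]
    have hneg : Real.sin (-θ + φ) < 0 := by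
      by_contra hcon
      push_neg at hcon
      have h0 : 0 ≤ ‖d‖ * ‖b‖ * Real.sin (-θ + φ) :=
        mul_nonneg (le_of_lt (mul_pos habsd habsb)) hcon
      rw [heq] at h0
      nlinarith
    by_contra hcon
    push_neg at hcon
    have h1 : 0 ≤ -θ + φ := by linarith
    have h2 : -θ + φ ≤ Real.pi := by linarith
    have := Real.sin_nonneg_of_nonneg_of_le_pi h1 h2
    linarith
  -- choose k
  set k : ℕ := ⌈Real.pi / θ⌉₊ with hk
  have hk0 : 0 < k := Nat.ceil_pos.2 (div_pos Real.pi_pos hθpos)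
  have hπle : Real.pi ≤ k * θ := by
    have h := Nat.le_ceil (Real.pi / θ)
    rw [← hk] at h
    rw [div_le_iff₀ hθpos] at h
    linarith
  have hklt : (k : ℝ) * θ < Real.pi + θ := by
    have h := Nat.ceil_lt_add_one (le_of_lt (div_pos Real.pi_pos hθpos))
    rw [← hk] at h
    have h2 : (k : ℝ) * θ < (Real.pi / θ + 1) * θ := mul_lt_mul_of_pos_right h hθpos
    rwa [add_mul, div_mul_cancel₀ _ (ne_of_gt hθpos), one_mul] at h2
  have hk2π : (k : ℝ) * θ < 2 * Real.pi := by linarith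
  set ψ : ℝ := (k : ℝ) * θ with hψ
  set χ : ℝ := (k : ℝ) * φ with hχ
  have hkRpos : (0 : ℝ) < k := by exact_mod_cast hk0
  have hχpos : 0 < χ := mul_pos hkRpos hφpos
  have hχψ : χ < ψ := mul_lt_mul_of_pos_left hφθ hkRpos
  have hsinsub : Real.sin (ψ - Real.pi) = - Real.sin ψ := by simp [Real.sin_sub]
  have hsinψ : Real.sin ψ ≤ 0 := by
    have h2 : 0 ≤ Real.sin (ψ - Real.pi) :=
      Real.sin_nonneg_of_nonneg_of_le_pi (by linarith) (by linarith)
    linarith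
  have hdkim : (d ^ k).im = ‖d‖ ^ k * Real.sin ψ := by
    rw [pow_polar, polar_im]
  have hbkim : (b ^ k).im = ‖b‖ ^ k * Real.sin χ := by
    rw [pow_polar, polar_im]
  rcases eq_or_lt_of_le hsinψ with hψ0 | hψneg
  · -- sin ψ = 0, hence ψ = π, use β = I
    have hψπ : ψ = Real.pi := by
      by_contra hne
      have hψgtπ : Real.pi < ψ := lt_of_le_of_ne hπle (fun h => hne h.symm)
      have hpos2 : 0 < Real.sin (ψ - Real.pi) :=
        Real.sin_pos_of_pos_of_lt_pi (by linarith) (by linarith)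
      rw [hsinsub, hψ0] at hpos2
      simp at hpos2
    have hsinχ : 0 < Real.sin χ :=
      Real.sin_pos_of_pos_of_lt_pi hχpos (by rw [← hψπ]; exact hχψ)
    have hIdk : 0 ≤ (I * d ^ k).re := by
      have h2 : (I * d ^ k).re = -(d ^ k).im := by simp [Complex.mul_re]
      rw [h2, hdkim, hψ0, mul_zero, neg_zero]
    have hH := H k hk0 I (by simp) hIdk
    have hIb : (I * b ^ k).re = -(b ^ k).im := by simp [Complex.mul_re]
    rw [hIb, hbkim] at hH
    have hposs : 0 < ‖b‖ ^ k * Real.sin χ :=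
      mul_pos (pow_pos habsb k) hsinχ
    linarith
  · -- sin ψ < 0
    have hdkimneg : (d ^ k).im < 0 := by
      rw [hdkim]
      have h3 : 0 < ‖d‖ ^ k := pow_pos habsd k
      exact mul_neg_of_pos_of_neg h3 hψneg
    obtain ⟨s', t', hs', ht', hrep⟩ := lemD (ne_of_lt hdkimneg) (H k hk0)
    have hrepim : (b ^ k).im = t' * (d ^ k).im := by
      rw [hrep]
      simp [Complex.add_im, Complex.mul_im]
    rcases lt_or_ge 0 (Real.sin χ) with hsinχ | hsinχ
    · have h1 : 0 < (b ^ k).im := by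
        rw [hbkim]
        exact mul_pos (pow_pos habsb k) hsinχ
      have h2 : t' * (d ^ k).im ≤ 0 :=
        mul_nonpos_of_nonneg_of_nonpos ht' (le_of_lt hdkimneg)
      rw [hrepim] at h1
      linarith
    · have hχgeπ : Real.pi ≤ χ := by
        by_contra hcon
        push_neg at hcon
        have := Real.sin_pos_of_pos_of_lt_pi hχpos hcon
        linarith
      have him : ((starRingEnd ℂ) (d ^ k) * (b ^ k)).im =
          (‖d‖ ^ k * ‖b‖ ^ k) * Real.sin (-ψ + χ) := by
        conv_lhs => rw [pow_polar d k, pow_polar b k]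
        rw [conj_polar, polar_mul_im, ← hθdef, ← hφdef, ← hψ, ← hχ]
      have hsinneg : Real.sin (-ψ + χ) < 0 := by
        have h1 : 0 < Real.sin (ψ - χ) :=
          Real.sin_pos_of_pos_of_lt_pi (by linarith) (by linarith)
        have h2 : Real.sin (-ψ + χ) = - Real.sin (ψ - χ) := by
          rw [show -ψ + χ = -(ψ - χ) by ring, Real.sin_neg]
        linarith
      have himlt : ((starRingEnd ℂ) (d ^ k) * (b ^ k)).im < 0 := by
        rw [him]
        exact mul_neg_of_pos_of_neg
          (mul_pos (pow_pos habsd k) (pow_pos habsb k)) hsinneg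
      have himge : 0 ≤ ((starRingEnd ℂ) (d ^ k) * (b ^ k)).im := by
        rw [hrep]
        have hcomp : ((starRingEnd ℂ) (d ^ k) * ((s' : ℂ) + (t' : ℂ) * d ^ k)).im =
            s' * (-(d ^ k).im) := by
          simp only [Complex.mul_im, Complex.add_im, Complex.add_re, Complex.mul_re,
            Complex.conj_re, Complex.conj_im, Complex.ofReal_re, Complex.ofReal_im]
          ring
        rw [hcomp]
        have : 0 ≤ -(d ^ k).im := by linarith
        exact mul_nonneg hs' this
      linarith

lemma lemB {d b : ℂ} (hd : d.im ≠ 0)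
    (H : ∀ n : ℕ, 0 < n → ∀ β : ℂ, 0 ≤ β.re → 0 ≤ (β * d ^ n).re → 0 ≤ (β * b ^ n).re) :
    (∃ s : ℝ, 0 ≤ s ∧ b = (s : ℂ)) ∨ (∃ t : ℝ, 0 ≤ t ∧ b = (t : ℂ) * d) := by
  rcases lt_or_gt_of_ne hd with hneg | hpos
  · have hd' : 0 < ((starRingEnd ℂ) d).im := by
      rw [Complex.conj_im]
      linarith
    have H' : ∀ n : ℕ, 0 < n → ∀ β : ℂ, 0 ≤ β.re →
        0 ≤ (β * ((starRingEnd ℂ) d) ^ n).re → 0 ≤ (β * ((starRingEnd ℂ) b) ^ n).re := by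
      intro n hn β h1 h2
      have h1' : 0 ≤ ((starRingEnd ℂ) β).re := by rwa [Complex.conj_re]
      have h2' : 0 ≤ ((starRingEnd ℂ) β * d ^ n).re := by
        have heq : (starRingEnd ℂ) β * d ^ n =
            (starRingEnd ℂ) (β * ((starRingEnd ℂ) d) ^ n) := by
          rw [map_mul, map_pow, Complex.conj_conj]
        rw [heq, Complex.conj_re]
        exact h2
      have h3 := H n hn ((starRingEnd ℂ) β) h1' h2'
      have heq : β * ((starRingEnd ℂ) b) ^ n =
          (starRingEnd ℂ) ((starRingEnd ℂ) β * b ^ n) := by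
        rw [map_mul, map_pow, Complex.conj_conj]
      rw [heq, Complex.conj_re]
      exact h3
    rcases lemB_pos hd' H' with ⟨s, hs, hbs⟩ | ⟨t, ht, hbt⟩
    · left
      refine ⟨s, hs, ?_⟩
      have h4 := congrArg (starRingEnd ℂ) hbs
      rw [Complex.conj_conj] at h4
      rw [h4, Complex.conj_ofReal]
    · right
      refine ⟨t, ht, ?_⟩
      have h4 := congrArg (starRingEnd ℂ) hbt
      rw [Complex.conj_conj, map_mul, Complex.conj_conj, Complex.conj_ofReal] at h4
      exact h4
  · exact lemB_pos hpos H


lemma sq_real {w : ℂ} {u : ℝ} (hu : 0 ≤ u) (h : w ^ 2 = (u : ℂ)) : w.im = 0 := by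
  have h1 : (w ^ 2).im = 2 * (w.re * w.im) := by rw [pow_two, Complex.mul_im]; ring
  have h2 : (w ^ 2).re = w.re ^ 2 - w.im ^ 2 := by rw [pow_two, Complex.mul_re]; ring
  have e1 : (0 : ℝ) = 2 * (w.re * w.im) := by rw [← h1, h, Complex.ofReal_im]
  have e2 : u = w.re ^ 2 - w.im ^ 2 := by rw [← h2, h, Complex.ofReal_re]
  by_contra him0
  have hmul : w.re * w.im = 0 := by linarith
  rcases mul_eq_zero.1 hmul with h0 | h0
  · have : 0 < w.im ^ 2 := by positivity
    rw [h0] at e2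
    nlinarith
  · exact him0 h0

lemma sq_ray {cc : ℂ} (hc : cc ≠ 0) {w : ℂ} {u : ℝ} (hu : 0 ≤ u)
    (h : w ^ 2 = (u : ℂ) * cc ^ 2) : ∃ x : ℝ, w = cc * (x : ℂ) := by
  set v := w / cc with hv
  have hv2 : v ^ 2 = (u : ℂ) := by
    rw [hv, div_pow, h]
    field_simp
  have hvim : v.im = 0 := sq_real hu hv2
  refine ⟨v.re, ?_⟩
  have hveq : v = ((v.re : ℝ) : ℂ) := by
    apply Complex.ext <;> simp [hvim]
  calc w = cc * v := by rw [hv]; field_simp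
    _ = cc * ((v.re : ℝ) : ℂ) := by rw [← hveq]

lemma evalX0 (z : ℂ × ℂ) : pEval (MvPolynomial.X 0) z = z.1 := by
  rw [pEval, MvPolynomial.eval_X]; simp
lemma evalX1 (z : ℂ × ℂ) : pEval (MvPolynomial.X 1) z = z.2 := by
  rw [pEval, MvPolynomial.eval_X]; simp
lemma evalQ1 (z : ℂ × ℂ) : pEval ((MvPolynomial.X 0) ^ 2) z = z.1 ^ 2 := by
  rw [pEval, map_pow, MvPolynomial.eval_X]; simp
lemma evalQ2 (z : ℂ × ℂ) : pEval ((MvPolynomial.X 1) ^ 2) z = z.2 ^ 2 := by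
  rw [pEval, map_pow, MvPolynomial.eval_X]; simp
lemma evalQ3 (z : ℂ × ℂ) : pEval ((MvPolynomial.X 0 + MvPolynomial.X 1) ^ 2) z
    = (z.1 + z.2) ^ 2 := by
  rw [pEval, map_pow, map_add, MvPolynomial.eval_X, MvPolynomial.eval_X]; simp

lemma pEval_pow (P : MvPolynomial (Fin 2) ℂ) (n : ℕ) (z : ℂ × ℂ) :
    pEval (P ^ n) z = (pEval P z) ^ n := by
  rw [pEval, map_pow]; rfl

lemma pEval_continuous (P : MvPolynomial (Fin 2) ℂ) :
    Continuous fun w : ℂ × ℂ => pEval P w := by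
  have h1 : Continuous fun w : ℂ × ℂ => (![w.1, w.2] : Fin 2 → ℂ) := by
    apply continuous_pi
    intro i
    fin_cases i
    · simpa using continuous_fst
    · simpa using continuous_snd
  exact (MvPolynomial.continuous_eval (p := P)).comp h1

lemma bdd_helper {K : Set (ℂ × ℂ)} {g : ℂ × ℂ → ℝ} {C : ℝ} (h : ∀ w ∈ K, g w ≤ C) :
    BddAbove (Set.range fun w => ⨆ _ : w ∈ K, g w) := by
  refine ⟨max C 0, ?_⟩
  rintro x ⟨w, rfl⟩
  show (⨆ _ : w ∈ K, g w) ≤ max C 0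
  by_cases hw : w ∈ K
  · rw [ciSup_pos hw]
    exact le_max_of_le_left (h w hw)
  · haveI : IsEmpty (w ∈ K) := ⟨hw⟩
    rw [iSup, Set.range_eq_empty, Real.sSup_empty]
    exact le_max_right _ _

lemma lines_case {cc : ℂ} (hcc : cc.im ≠ 0) {z1 z2 : ℂ}
    (h1 : z1.im = 0 ∨ ∃ x : ℝ, z1 = cc * (x : ℂ))
    (h2 : z2.im = 0 ∨ ∃ y : ℝ, z2 = cc * (y : ℂ))
    (h3 : (z1 + z2).im = 0 ∨ ∃ x : ℝ, z1 + z2 = cc * (x : ℂ)) :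
    (z1.im = 0 ∧ z2.im = 0) ∨ (∃ x y : ℝ, z1 = cc * (x : ℂ) ∧ z2 = cc * (y : ℂ)) := by
  have real_line : ∀ (x : ℝ) (w : ℂ), w = cc * (x : ℂ) → w.im = 0 → w = 0 := by
    intro x w hw him
    have : cc.im * x = 0 := by
      rw [hw] at him
      simpa [Complex.mul_im] using him
    rcases mul_eq_zero.1 this with h | h
    · exact absurd h hcc
    · rw [hw, h]
      simp
  rcases h1 with hr1 | ⟨x, hx⟩
  · rcases h2 with hr2 | ⟨y, hy⟩
    · exact Or.inl ⟨hr1, hr2⟩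
    · by_cases hz2 : z2.im = 0
      · exact Or.inl ⟨hr1, hz2⟩
      · have h3im : (z1 + z2).im ≠ 0 := by
          rw [Complex.add_im, hr1, zero_add]
          exact hz2
        rcases h3 with h | ⟨w, hw⟩
        · exact absurd h h3im
        · have hz1 : z1 = cc * (((w - y : ℝ)) : ℂ) := by
            have : z1 = (z1 + z2) - z2 := by ring
            rw [this, hw, hy]
            push_cast
            ring
          have hz10 : z1 = 0 := real_line _ _ hz1 hr1
          exact Or.inr ⟨0, y, by rw [hz10]; simp, hy⟩
  · rcases h2 with hr2 | ⟨y, hy⟩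
    · by_cases hz1 : z1.im = 0
      · exact Or.inl ⟨hz1, hr2⟩
      · have h3im : (z1 + z2).im ≠ 0 := by
          rw [Complex.add_im, hr2, add_zero]
          exact hz1
        rcases h3 with h | ⟨w, hw⟩
        · exact absurd h h3im
        · have hz2' : z2 = cc * (((w - x : ℝ)) : ℂ) := by
            have : z2 = (z1 + z2) - z1 := by ring
            rw [this, hw, hx]
            push_cast
            ring
          have hz20 : z2 = 0 := real_line _ _ hz2' hr2
          exact Or.inr ⟨x, 0, hx, by rw [hz20]; simp⟩
    · exact Or.inr ⟨x, y, hx, hy⟩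

lemma real_mul_re (a : ℝ) (w : ℂ) : ((a : ℂ) * w).re = a * w.re := by
  simp [Complex.mul_re]

lemma coord_line (p : ℝ) (hp : p ≠ 0) {ρ : ℝ} (hρ : 0 < ρ) {z : ℂ × ℂ}
    (hz : ∀ P : MvPolynomial (Fin 2) ℂ,
      ‖pEval P z‖ ≤ ⨆ w ∈ (R2set ∪ P2 p) ∩ closedBall 0 ρ, ‖pEval P w‖)
    (Q : MvPolynomial (Fin 2) ℂ)
    (hQval : ∀ w ∈ R2set ∪ P2 p, ∃ u : ℝ, 0 ≤ u ∧
      (pEval Q w = (u : ℂ) ∨ pEval Q w = (u : ℂ) * ((p : ℂ) + I) ^ 2))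
    (hQbound : ∀ w ∈ closedBall (0 : ℂ × ℂ) ρ, ‖pEval Q w‖ ≤ 4 * ρ ^ 2)
    (hQz : ‖pEval Q z‖ ≤ 4 * ρ ^ 2) :
    (∃ u : ℝ, 0 ≤ u ∧ pEval Q z = (u : ℂ)) ∨
      (∃ u : ℝ, 0 ≤ u ∧ pEval Q z = (u : ℂ) * ((p : ℂ) + I) ^ 2) := by
  set cc : ℂ := (p : ℂ) + I with hccdef
  set d : ℂ := cc ^ 2 with hddef
  have hccre : cc.re = p := by simp [hccdef]
  have hccim : cc.im = 1 := by simp [hccdef]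
  have hdim : d.im = 2 * p := by
    rw [hddef, pow_two, Complex.mul_im, hccre, hccim]
    ring
  have hdim0 : d.im ≠ 0 := by
    rw [hdim]
    intro h
    apply hp
    linarith
  clear_value d cc
  have H : ∀ n : ℕ, 0 < n → ∀ β : ℂ, 0 ≤ β.re → 0 ≤ (β * d ^ n).re →
      0 ≤ (β * (pEval Q z) ^ n).re := by
    intro n hn β hβ1 hβ2
    set M : ℝ := (1 + 4 * ρ ^ 2) ^ n with hM
    have hM0 : 0 ≤ M := by positivity
    have hM1 : (4 * ρ ^ 2) ^ n ≤ M := by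
      apply pow_le_pow_left₀ (by positivity)
      linarith
    set τ : ℝ := (1 + ‖β‖ * M)⁻¹ with hτ
    have hτpos : 0 < τ := by
      rw [hτ]
      have : 0 < 1 + ‖β‖ * M := by positivity
      positivity
    have hτ1 : τ * (‖β‖ * M) ≤ 1 := by
      rw [hτ]
      rw [inv_mul_le_iff₀ (by positivity)]
      linarith
    have hnormbound : ∀ w : ℂ × ℂ, ‖pEval Q w‖ ≤ 4 * ρ ^ 2 →
        ‖(τ : ℂ) * β * pEval (Q ^ n) w‖ ≤ 1 := by
      intro w hw
      rw [pEval_pow, norm_mul, norm_mul, Complex.norm_real, norm_pow,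
        Real.norm_eq_abs, abs_of_pos hτpos]
      calc τ * ‖β‖ * ‖pEval Q w‖ ^ n ≤ τ * ‖β‖ * (4 * ρ ^ 2) ^ n := by
            apply mul_le_mul_of_nonneg_left _ (by positivity)
            exact pow_le_pow_left₀ (norm_nonneg _) hw n
        _ ≤ τ * (‖β‖ * M) := by
            rw [mul_assoc]
            apply mul_le_mul_of_nonneg_left _ (le_of_lt hτpos)
            exact mul_le_mul_of_nonneg_left hM1 (norm_nonneg _)
        _ ≤ 1 := hτ1
    have hlemA := lemA hz (Q ^ n) ((τ : ℂ) * β) ?_ ?_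
    · have heq : (τ : ℂ) * β * pEval (Q ^ n) z = (τ : ℂ) * (β * (pEval Q z) ^ n) := by
        rw [pEval_pow]
        ring
      rw [heq, real_mul_re] at hlemA
      nlinarith
    · intro w hw
      obtain ⟨hw1, hw2⟩ := hw
      obtain ⟨u, hu, hform⟩ := hQval w hw1
      constructor
      · rw [pEval_pow]
        rcases hform with hf | hf
        · have heq : (τ : ℂ) * β * (pEval Q w) ^ n = ((τ * u ^ n : ℝ) : ℂ) * β := by
            rw [hf]
            push_cast
            ring
          rw [heq, real_mul_re]
          apply mul_nonneg (by positivity) hβ1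
        · have heq : (τ : ℂ) * β * (pEval Q w) ^ n =
              ((τ * u ^ n : ℝ) : ℂ) * (β * d ^ n) := by
            rw [hf]
            push_cast
            ring
          rw [heq, real_mul_re]
          apply mul_nonneg (by positivity) hβ2
      · exact hnormbound w (hQbound w hw2)
    · exact hnormbound z hQz
  exact lemB hdim0 H

lemma coord_bound {ρ : ℝ} {w : ℂ × ℂ} (h : w ∈ closedBall (0 : ℂ × ℂ) ρ) :
    ‖w.1‖ ≤ ρ ∧ ‖w.2‖ ≤ ρ := by
  rw [mem_closedBall_zero_iff, Prod.norm_def] at h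
  exact ⟨le_trans (le_max_left _ _) h, le_trans (le_max_right _ _) h⟩

lemma main_polyconvex (p : ℝ) (hp : p ≠ 0) {ρ : ℝ} (hρ : 0 < ρ) :
    PolyConvex ((R2set ∪ P2 p) ∩ closedBall 0 ρ) := by
  unfold PolyConvex
  set cc : ℂ := (p : ℂ) + I with hccdef
  have hccre : cc.re = p := by simp [hccdef]
  have hccim : cc.im = 1 := by simp [hccdef]
  have hcc0 : cc ≠ 0 := by
    intro h
    rw [h] at hccim
    simp at hccim
  apply Set.Subset.antisymm
  · -- hull ⊆ K
    intro z hz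
    simp only [Set.mem_setOf_eq] at hz
    have hz1 : ‖z.1‖ ≤ ρ := by
      have h := hz (MvPolynomial.X 0)
      rw [evalX0] at h
      refine le_trans h (real_biSup_le (le_of_lt hρ) ?_)
      intro w hw
      rw [evalX0]
      exact (coord_bound hw.2).1
    have hz2 : ‖z.2‖ ≤ ρ := by
      have h := hz (MvPolynomial.X 1)
      rw [evalX1] at h
      refine le_trans h (real_biSup_le (le_of_lt hρ) ?_)
      intro w hw
      rw [evalX1]
      exact (coord_bound hw.2).2
    have hzball : z ∈ closedBall (0 : ℂ × ℂ) ρ := by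
      rw [mem_closedBall_zero_iff, Prod.norm_def]
      exact max_le hz1 hz2
    -- values of the three quadratics on the union of the planes
    have hval1 : ∀ w ∈ R2set ∪ P2 p, ∃ u : ℝ, 0 ≤ u ∧
        (pEval (MvPolynomial.X 0 ^ 2) w = (u : ℂ) ∨
          pEval (MvPolynomial.X 0 ^ 2) w = (u : ℂ) * cc ^ 2) := by
      intro w hw
      rcases hw with hw | hw
      · obtain ⟨h1, _⟩ := hw
        refine ⟨w.1.re ^ 2, by positivity, Or.inl ?_⟩
        rw [evalQ1]
        have e1 : w.1 = ((w.1.re : ℝ) : ℂ) := by apply Complex.ext <;> simp [h1]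
        conv_lhs => rw [e1]
        push_cast
        ring
      · obtain ⟨x, y, hxy⟩ := hw
        refine ⟨x ^ 2, by positivity, Or.inr ?_⟩
        rw [evalQ1, hxy]
        push_cast
        ring
    have hval2 : ∀ w ∈ R2set ∪ P2 p, ∃ u : ℝ, 0 ≤ u ∧
        (pEval (MvPolynomial.X 1 ^ 2) w = (u : ℂ) ∨
          pEval (MvPolynomial.X 1 ^ 2) w = (u : ℂ) * cc ^ 2) := by
      intro w hw
      rcases hw with hw | hw
      · obtain ⟨_, h2⟩ := hw
        refine ⟨w.2.re ^ 2, by positivity, Or.inl ?_⟩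
        rw [evalQ2]
        have e2 : w.2 = ((w.2.re : ℝ) : ℂ) := by apply Complex.ext <;> simp [h2]
        conv_lhs => rw [e2]
        push_cast
        ring
      · obtain ⟨x, y, hxy⟩ := hw
        refine ⟨y ^ 2, by positivity, Or.inr ?_⟩
        rw [evalQ2, hxy]
        push_cast
        ring
    have hval3 : ∀ w ∈ R2set ∪ P2 p, ∃ u : ℝ, 0 ≤ u ∧
        (pEval ((MvPolynomial.X 0 + MvPolynomial.X 1) ^ 2) w = (u : ℂ) ∨
          pEval ((MvPolynomial.X 0 + MvPolynomial.X 1) ^ 2) w = (u : ℂ) * cc ^ 2) := by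
      intro w hw
      rcases hw with hw | hw
      · obtain ⟨h1, h2⟩ := hw
        refine ⟨(w.1.re + w.2.re) ^ 2, by positivity, Or.inl ?_⟩
        rw [evalQ3]
        have e1 : w.1 = ((w.1.re : ℝ) : ℂ) := by apply Complex.ext <;> simp [h1]
        have e2 : w.2 = ((w.2.re : ℝ) : ℂ) := by apply Complex.ext <;> simp [h2]
        conv_lhs => rw [e1, e2]
        push_cast
        ring
      · obtain ⟨x, y, hxy⟩ := hw
        refine ⟨(x + y) ^ 2, by positivity, Or.inr ?_⟩
        rw [evalQ3, hxy]
        push_cast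
        ring
    -- bounds
    have hbnd1 : ∀ w ∈ closedBall (0 : ℂ × ℂ) ρ,
        ‖pEval (MvPolynomial.X 0 ^ 2) w‖ ≤ 4 * ρ ^ 2 := by
      intro w hw
      rw [evalQ1, norm_pow]
      have := (coord_bound hw).1
      nlinarith [norm_nonneg w.1]
    have hbnd2 : ∀ w ∈ closedBall (0 : ℂ × ℂ) ρ,
        ‖pEval (MvPolynomial.X 1 ^ 2) w‖ ≤ 4 * ρ ^ 2 := by
      intro w hw
      rw [evalQ2, norm_pow]
      have := (coord_bound hw).2
      nlinarith [norm_nonneg w.2]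
    have hbnd3 : ∀ w ∈ closedBall (0 : ℂ × ℂ) ρ,
        ‖pEval ((MvPolynomial.X 0 + MvPolynomial.X 1) ^ 2) w‖ ≤ 4 * ρ ^ 2 := by
      intro w hw
      rw [evalQ3, norm_pow]
      have h1 := (coord_bound hw).1
      have h2 := (coord_bound hw).2
      have h3 : ‖w.1 + w.2‖ ≤ 2 * ρ := le_trans (norm_add_le _ _) (by linarith)
      nlinarith [norm_nonneg (w.1 + w.2)]
    -- apply coord_line to each quadratic
    have A1 := coord_line p hp hρ hz _ hval1 hbnd1 (hbnd1 z hzball)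
    have A2 := coord_line p hp hρ hz _ hval2 hbnd2 (hbnd2 z hzball)
    have A3 := coord_line p hp hρ hz _ hval3 hbnd3 (hbnd3 z hzball)
    rw [evalQ1] at A1
    rw [evalQ2] at A2
    rw [evalQ3] at A3
    have B1 : z.1.im = 0 ∨ ∃ x : ℝ, z.1 = cc * (x : ℂ) := by
      rcases A1 with ⟨u, hu, h⟩ | ⟨u, hu, h⟩
      · exact Or.inl (sq_real hu h)
      · exact Or.inr (sq_ray hcc0 hu h)
    have B2 : z.2.im = 0 ∨ ∃ y : ℝ, z.2 = cc * (y : ℂ) := by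
      rcases A2 with ⟨u, hu, h⟩ | ⟨u, hu, h⟩
      · exact Or.inl (sq_real hu h)
      · exact Or.inr (sq_ray hcc0 hu h)
    have B3 : (z.1 + z.2).im = 0 ∨ ∃ x : ℝ, z.1 + z.2 = cc * (x : ℂ) := by
      rcases A3 with ⟨u, hu, h⟩ | ⟨u, hu, h⟩
      · exact Or.inl (sq_real hu h)
      · exact Or.inr (sq_ray hcc0 hu h)
    have hccim0 : cc.im ≠ 0 := by rw [hccim]; norm_num
    rcases lines_case hccim0 B1 B2 B3 with ⟨i1, i2⟩ | ⟨x, y, e1, e2⟩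
    · exact ⟨Or.inl ⟨i1, i2⟩, hzball⟩
    · refine ⟨Or.inr ⟨x, y, ?_⟩, hzball⟩
      exact Prod.ext_iff.mpr ⟨e1, e2⟩
  · -- K ⊆ hull
    intro z hzK
    simp only [Set.mem_setOf_eq]
    intro P
    obtain ⟨C, hC⟩ := (isCompact_closedBall (0 : ℂ × ℂ) ρ).exists_bound_of_continuousOn
      (pEval_continuous P).continuousOn
    exact le_real_biSup (bdd_helper (fun w hw => hC w hw.2)) hzK

lemma I_mul_line {p x x' : ℝ}
    (h : Complex.I * (((p : ℂ) + I) * (x : ℂ)) = ((p : ℂ) + I) * (x' : ℂ)) :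
    x = 0 ∧ x' = 0 := by
  have e1 := congrArg Complex.re h
  have e2 := congrArg Complex.im h
  simp [Complex.mul_re, Complex.mul_im] at e1 e2
  constructor <;> nlinarith [sq_nonneg p, sq_nonneg x, sq_nonneg x']

noncomputable def gLin (p : ℝ) : ℝ →ₗ[ℝ] ℂ where
  toFun := fun x => ((p : ℂ) + I) * (x : ℂ)
  map_add' := by
    intro a b
    push_cast
    ring
  map_smul' := by
    intro r a
    simp only [smul_eq_mul, RingHom.id_apply, Complex.real_smul]
    push_cast
    ring

noncomputable def fLin (p : ℝ) : (ℝ × ℝ) →ₗ[ℝ] (ℂ × ℂ) := (gLin p).prodMap (gLin p)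

/-- for every p ∈ ℝ \ {0}, P₂(p) is a totally-real plane meeting ℝ² only
at 0, and ℝ² ∪ P₂(p) is locally polynomially convex at the origin. -/
theorem P2_totallyReal_and_union_locPolyConvex (p : ℝ) (hp : p ≠ 0) :
    (∃ M : Submodule ℝ (ℂ × ℂ), (M : Set (ℂ × ℂ)) = P2 p ∧ IsTotallyRealPlane M) ∧
    P2 p ∩ R2set = {(0 : ℂ × ℂ)} ∧
    LocPolyConvexAt (R2set ∪ P2 p) 0 := by
  set cc : ℂ := (p : ℂ) + I with hccdef
  have hccim : cc.im = 1 := by simp [hccdef]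
  have hcc0 : cc ≠ 0 := by
    intro h
    rw [h] at hccim
    simp at hccim
  refine ⟨?_, ?_, ?_⟩
  · -- the submodule
    refine ⟨{ carrier := P2 p
              add_mem' := ?_
              zero_mem' := ⟨0, 0, by simp; rfl⟩
              smul_mem' := ?_ }, rfl, ?_, ?_⟩
    · rintro a b ⟨x, y, ha⟩ ⟨x', y', hb⟩
      refine ⟨x + x', y + y', ?_⟩
      rw [ha, hb, Prod.mk_add_mk]
      simp only [Prod.mk.injEq]
      constructor <;> (push_cast; ring)
    · rintro r v ⟨x, y, hv⟩
      refine ⟨r * x, r * y, ?_⟩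
      rw [hv, Prod.smul_mk]
      simp only [Prod.mk.injEq, Complex.real_smul]
      constructor <;> (push_cast; ring)
    · -- finrank = 2
      show Module.finrank ℝ _ = 2
      have hrange : LinearMap.range (fLin p) =
          ({ carrier := P2 p
             add_mem' := by
               rintro a b ⟨x, y, ha⟩ ⟨x', y', hb⟩
               refine ⟨x + x', y + y', ?_⟩
               rw [ha, hb, Prod.mk_add_mk]
               simp only [Prod.mk.injEq]
               constructor <;> (push_cast; ring)
             zero_mem' := ⟨0, 0, by simp; rfl⟩
             smul_mem' := by
               rintro r v ⟨x, y, hv⟩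
               refine ⟨r * x, r * y, ?_⟩
               rw [hv, Prod.smul_mk]
               simp only [Prod.mk.injEq, Complex.real_smul]
               constructor <;> (push_cast; ring) } : Submodule ℝ (ℂ × ℂ)) := by
        apply le_antisymm
        · rintro v ⟨⟨x, y⟩, rfl⟩
          exact ⟨x, y, rfl⟩
        · rintro v ⟨x, y, hv⟩
          exact ⟨(x, y), hv.symm⟩
      have hinj : Function.Injective (fLin p) := by
        intro a b hab
        have h1 := congrArg Prod.fst hab
        have h2 := congrArg Prod.snd hab
        simp only [fLin, LinearMap.prodMap_apply, gLin, LinearMap.coe_mk, AddHom.coe_mk] at h1 h2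
        have hx : (a.1 : ℂ) = (b.1 : ℂ) := mul_left_cancel₀ hcc0 h1
        have hy : (a.2 : ℂ) = (b.2 : ℂ) := mul_left_cancel₀ hcc0 h2
        exact Prod.ext_iff.mpr ⟨by exact_mod_cast hx, by exact_mod_cast hy⟩
      have hequiv := LinearEquiv.ofInjective (fLin p) hinj
      have h2 : Module.finrank ℝ (ℝ × ℝ) =
          Module.finrank ℝ (LinearMap.range (fLin p)) := LinearEquiv.finrank_eq hequiv
      rw [← hrange, ← h2]
      simp [Module.finrank_prod, Module.finrank_self]
    · -- totally real
      rintro v ⟨x, y, hv⟩ ⟨x', y', hv'⟩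
      rw [hv, Prod.smul_mk] at hv'
      simp only [Prod.mk.injEq, smul_eq_mul] at hv'
      obtain ⟨hx, _⟩ := I_mul_line hv'.1
      obtain ⟨hy, _⟩ := I_mul_line hv'.2
      rw [hv, hx, hy]
      simp
  · -- intersection
    ext v
    simp only [Set.mem_inter_iff, Set.mem_singleton_iff]
    constructor
    · rintro ⟨⟨x, y, hv⟩, h1, h2⟩
      rw [hv] at h1 h2 ⊢
      have hxim : (cc * (x : ℂ)).im = x := by
        rw [Complex.mul_im, hccim]
        simp
      have hyim : (cc * (y : ℂ)).im = y := by
        rw [Complex.mul_im, hccim]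
        simp
      rw [hxim] at h1
      rw [hyim] at h2
      rw [h1, h2]
      simp [Prod.ext_iff]
    · rintro rfl
      exact ⟨⟨0, 0, by simp; rfl⟩, by constructor <;> simp⟩
  · exact ⟨1, one_pos, fun ρ h1 _ => main_polyconvex p hp h1⟩
end

section
/- Let X ⊂ ℂⁿ be compact and let f ∈ ℂ[z₁,…,zₙ] be a polynomial that is real-valued on X. Then X is polynomially convex if and only if for each t ∈ ℝ the fibre f⁻¹{t} ∩ X is polynomially convex. -/
open Complex Metric Set

/-- Polynomial convexity for a subset of ℂⁿ. -/
def PolyConvexN (n : ℕ) (K : Set (Fin n → ℂ)) : Prop :=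
  {z : Fin n → ℂ | ∀ P : MvPolynomial (Fin n) ℂ,
      ‖MvPolynomial.eval z P‖ ≤ ⨆ w ∈ K, ‖MvPolynomial.eval w P‖} = K

namespace StoutAux

variable {n : ℕ}

/-- Abbreviation for the sup of `‖eval · P‖` over a set. -/
noncomputable def S (K : Set (Fin n → ℂ)) (P : MvPolynomial (Fin n) ℂ) : ℝ :=
  ⨆ w ∈ K, ‖MvPolynomial.eval w P‖

lemma S_nonneg (K : Set (Fin n → ℂ)) (P : MvPolynomial (Fin n) ℂ) : 0 ≤ S K P :=
  Real.iSup_nonneg fun _ => Real.iSup_nonneg fun _ => norm_nonneg _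

lemma S_le {K : Set (Fin n → ℂ)} {P : MvPolynomial (Fin n) ℂ} {c : ℝ}
    (hc : ∀ w ∈ K, ‖MvPolynomial.eval w P‖ ≤ c) (h0 : 0 ≤ c) : S K P ≤ c :=
  Real.iSup_le (fun w => Real.iSup_le (hc w) h0) h0

lemma le_S {K : Set (Fin n → ℂ)} {P : MvPolynomial (Fin n) ℂ} {c : ℝ}
    (hc : ∀ w ∈ K, ‖MvPolynomial.eval w P‖ ≤ c) {z : Fin n → ℂ} (hz : z ∈ K) :
    ‖MvPolynomial.eval z P‖ ≤ S K P := by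
  set h : (Fin n → ℂ) → ℝ := fun w => ⨆ _ : w ∈ K, ‖MvPolynomial.eval w P‖ with hh
  have hb : ∀ w, h w ≤ max c 0 := by
    intro w
    by_cases hw : w ∈ K
    · simp only [hh, ciSup_pos hw]
      exact le_max_of_le_left (hc w hw)
    · have : IsEmpty (w ∈ K) := ⟨hw⟩
      simp only [hh, Real.iSup_of_isEmpty]
      exact le_max_right _ _
  have hB : BddAbove (Set.range h) := ⟨max c 0, by rintro x ⟨w, rfl⟩; exact hb w⟩
  calc ‖MvPolynomial.eval z P‖ = h z := by simp only [hh, ciSup_pos hz]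
    _ ≤ ⨆ w, h w := le_ciSup hB z

/-- Version of `le_S` for `K` contained in a compact set. -/
lemma le_S_of_compact {X K : Set (Fin n → ℂ)} (hX : IsCompact X) (hKX : K ⊆ X)
    {P : MvPolynomial (Fin n) ℂ} {z : Fin n → ℂ} (hz : z ∈ K) :
    ‖MvPolynomial.eval z P‖ ≤ S K P := by
  obtain ⟨c, hc⟩ := hX.exists_bound_of_continuousOn
    (MvPolynomial.continuous_eval P).continuousOn
  exact le_S (fun w hw => hc w (hKX hw)) hz

lemma S_mono {X K : Set (Fin n → ℂ)} (hX : IsCompact X) (hKX : K ⊆ X)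
    (P : MvPolynomial (Fin n) ℂ) : S K P ≤ S X P :=
  S_le (fun w hw => le_S_of_compact hX (le_refl X) (hKX hw)) (S_nonneg X P)

/-- If `z` is in the hull of `X` and `f` is real-valued on `X`, then `f z` is real. -/
lemma im_eq_zero_of_mem_hull {X : Set (Fin n → ℂ)} (hX : IsCompact X)
    {f : MvPolynomial (Fin n) ℂ} (hreal : ∀ x ∈ X, (MvPolynomial.eval x f).im = 0)
    {z : Fin n → ℂ} (hz : ∀ P : MvPolynomial (Fin n) ℂ,
      ‖MvPolynomial.eval z P‖ ≤ S X P) :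
    (MvPolynomial.eval z f).im = 0 := by
  obtain ⟨M, hM⟩ := hX.exists_bound_of_continuousOn
    (MvPolynomial.continuous_eval f).continuousOn
  set a := (MvPolynomial.eval z f).re
  set b := (MvPolynomial.eval z f).im
  -- key inequality : ∀ s, a^2 + (b-s)^2 ≤ M^2 + s^2
  have key : ∀ s : ℝ, a ^ 2 + (b - s) ^ 2 ≤ M ^ 2 + s ^ 2 := by
    intro s
    set P : MvPolynomial (Fin n) ℂ := f - MvPolynomial.C ((s : ℂ) * Complex.I) with hP
    have hev : ∀ w, MvPolynomial.eval w P = MvPolynomial.eval w f - (s : ℂ) * Complex.I := by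
      intro w; simp [hP]
    have hC : S X P ≤ Real.sqrt (M ^ 2 + s ^ 2) := by
      refine S_le (fun w hw => ?_) (Real.sqrt_nonneg _)
      rw [hev w]
      have him := hreal w hw
      have hre : |(MvPolynomial.eval w f).re| ≤ M := by
        have := hM w hw
        calc |(MvPolynomial.eval w f).re| ≤ ‖MvPolynomial.eval w f‖ := Complex.abs_re_le_norm _
          _ ≤ M := this
      rw [← Real.sqrt_sq (norm_nonneg _)]
      apply Real.sqrt_le_sqrt
      have : ‖MvPolynomial.eval w f - (s : ℂ) * Complex.I‖ ^ 2
          = (MvPolynomial.eval w f).re ^ 2 + ((MvPolynomial.eval w f).im - s) ^ 2 := by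
        rw [Complex.sq_norm, Complex.normSq_apply]
        simp [Complex.sub_re, Complex.sub_im]
        ring
      rw [this, him]
      have := abs_le.mp hre
      nlinarith [this.1, this.2]
    have h1 : ‖MvPolynomial.eval z P‖ ≤ Real.sqrt (M ^ 2 + s ^ 2) := (hz P).trans hC
    have h2 : ‖MvPolynomial.eval z P‖ ^ 2 = a ^ 2 + (b - s) ^ 2 := by
      rw [hev z, Complex.sq_norm, Complex.normSq_apply]
      simp [Complex.sub_re, Complex.sub_im, a, b]
      ring
    have h3 : ‖MvPolynomial.eval z P‖ ^ 2 ≤ M ^ 2 + s ^ 2 := by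
      have := pow_le_pow_left₀ (norm_nonneg _) h1 2
      rwa [Real.sq_sqrt (by positivity)] at this
    linarith [h2 ▸ h3]
  by_contra hb
  have h := key ((a ^ 2 + b ^ 2 - M ^ 2 - 1) / (2 * b))
  have hb' : b ≠ 0 := hb
  have : 2 * b * ((a ^ 2 + b ^ 2 - M ^ 2 - 1) / (2 * b)) = a ^ 2 + b ^ 2 - M ^ 2 - 1 := by
    field_simp
  nlinarith [h, this]

end StoutAux

open StoutAux in
set_option maxHeartbeats 1000000 in
/-- Stout: if a polynomial f is real-valued on a compact X ⊆ ℂⁿ, then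
X is polynomially convex iff every real fibre f⁻¹{t} ∩ X is polynomially convex. -/
theorem polyConvex_iff_fibres_polyConvex (n : ℕ) (X : Set (Fin n → ℂ))
    (hX : IsCompact X) (f : MvPolynomial (Fin n) ℂ)
    (hreal : ∀ x ∈ X, (MvPolynomial.eval x f).im = 0) :
    PolyConvexN n X ↔
      ∀ t : ℝ, PolyConvexN n ((fun z => MvPolynomial.eval z f) ⁻¹' {(t : ℂ)} ∩ X) := by
  constructor
  · -- forward: X polynomially convex → every fibre is
    intro hhull t
    ext z
    simp only [Set.mem_setOf_eq, Set.mem_inter_iff, Set.mem_preimage, Set.mem_singleton_iff]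
    constructor
    · intro hz
      set F : Set (Fin n → ℂ) := (fun z => MvPolynomial.eval z f) ⁻¹' {(t : ℂ)} ∩ X with hF
      have hFX : F ⊆ X := Set.inter_subset_right
      constructor
      · -- eval z f = t, using P = f - C t
        set P : MvPolynomial (Fin n) ℂ := f - MvPolynomial.C (t : ℂ) with hP
        have h0 : S F P ≤ 0 := by
          refine S_le (fun w hw => ?_) le_rfl
          have : MvPolynomial.eval w f = (t : ℂ) := hw.1
          simp [hP, this]
        have := (hz P).trans h0
        have : MvPolynomial.eval z P = 0 := by
          rw [← norm_eq_zero]; exact le_antisymm this (norm_nonneg _)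
        have : MvPolynomial.eval z f - (t : ℂ) = 0 := by simpa [hP] using this
        linear_combination this
      · -- z ∈ X via hull of X
        have : z ∈ {z : Fin n → ℂ | ∀ P : MvPolynomial (Fin n) ℂ,
            ‖MvPolynomial.eval z P‖ ≤ ⨆ w ∈ X, ‖MvPolynomial.eval w P‖} := by
          intro P
          exact (hz P).trans (S_mono hX hFX P)
        unfold PolyConvexN at hhull
        rwa [hhull] at this
    · rintro ⟨hzt, hzX⟩ P
      exact le_S_of_compact hX Set.inter_subset_right ⟨hzt, hzX⟩
  · -- backward: all fibres polynomially convex → X is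
    intro hfib
    ext z
    simp only [Set.mem_setOf_eq]
    constructor
    · intro hz
      -- f z is real
      have hzS : ∀ P : MvPolynomial (Fin n) ℂ, ‖MvPolynomial.eval z P‖ ≤ S X P := hz
      have him : (MvPolynomial.eval z f).im = 0 := im_eq_zero_of_mem_hull hX hreal hzS
      set t : ℝ := (MvPolynomial.eval z f).re with ht
      have hft : MvPolynomial.eval z f = (t : ℂ) := by
        apply Complex.ext <;> simp [ht, him]
      set F : Set (Fin n → ℂ) := (fun z => MvPolynomial.eval z f) ⁻¹' {(t : ℂ)} ∩ X with hF
      have hFX : F ⊆ X := Set.inter_subset_right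
      -- It suffices to show z is in the hull of F
      suffices hsf : ∀ P : MvPolynomial (Fin n) ℂ, ‖MvPolynomial.eval z P‖ ≤ S F P by
        have hPC := hfib t
        unfold PolyConvexN at hPC
        have : z ∈ F := by
          rw [hF, ← hPC]
          exact hsf
        exact hFX this
      intro P
      refine le_of_forall_pos_le_add fun ε hε => ?_
      -- bounds
      obtain ⟨M0, hM0⟩ := hX.exists_bound_of_continuousOn
        (MvPolynomial.continuous_eval f).continuousOn
      set M : ℝ := max M0 0 with hMdef
      have hM : ∀ x ∈ X, ‖MvPolynomial.eval x f‖ ≤ M :=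
        fun x hx => le_max_of_le_left (hM0 x hx)
      have hMnn : (0:ℝ) ≤ M := le_max_right _ _
      obtain ⟨Cp, hCp⟩ := hX.exists_bound_of_continuousOn
        (MvPolynomial.continuous_eval P).continuousOn
      have hCp0 : ∀ x ∈ X, ‖MvPolynomial.eval x P‖ ≤ max Cp 0 :=
        fun x hx => le_max_of_le_left (hCp x hx)
      set Cp' := max Cp 0 with hCp'
      have hCp'0 : 0 ≤ Cp' := le_max_right _ _
      set B : ℝ := M + |t| + 1 with hB
      have hB0 : 0 < B := by
        have h1 : (0:ℝ) ≤ |t| := abs_nonneg t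
        rw [hB]; linarith
      -- bound on f - t over X
      have hRbound : ∀ x ∈ X, ‖MvPolynomial.eval x f - (t : ℂ)‖ ≤ M + |t| := by
        intro x hx
        calc ‖MvPolynomial.eval x f - (t : ℂ)‖ ≤ ‖MvPolynomial.eval x f‖ + ‖(t : ℂ)‖ :=
              norm_sub_le _ _
          _ ≤ M + |t| := by
              have := hM x hx
              simp only [Complex.norm_real]
              exact add_le_add this le_rfl
      -- find δ > 0 so that points of X with |f x - t| < δ have ‖P x‖ ≤ S F P + ε
      have hdelta : ∃ δ > 0, ∀ x ∈ X, ‖MvPolynomial.eval x f - (t : ℂ)‖ < δ →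
          ‖MvPolynomial.eval x P‖ ≤ S F P + ε := by
        set C : Set (Fin n → ℂ) :=
          {x ∈ X | S F P + ε ≤ ‖MvPolynomial.eval x P‖} with hCdef
        have hCclosed : IsClosed C := by
          have : C = X ∩ (fun x => ‖MvPolynomial.eval x P‖) ⁻¹' Set.Ici (S F P + ε) := by
            ext x; simp [hCdef, Set.mem_sep_iff]
          rw [this]
          exact hX.isClosed.inter (IsClosed.preimage
            ((MvPolynomial.continuous_eval P).norm) isClosed_Ici)
        have hCcompact : IsCompact C := hX.of_isClosed_subset hCclosed fun x hx => hx.1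
        rcases Set.eq_empty_or_nonempty C with hCe | hCne
        · exact ⟨1, one_pos, fun x hx hlt => by
            by_contra hcon
            push_neg at hcon
            have : x ∈ C := ⟨hx, le_of_lt hcon⟩
            rw [hCe] at this; exact this⟩
        · obtain ⟨x0, hx0C, hx0min⟩ := hCcompact.exists_isMinOn hCne
            ((MvPolynomial.continuous_eval f).sub continuous_const).norm.continuousOn
          set δ := ‖MvPolynomial.eval x0 f - (t : ℂ)‖ with hδ
          have hδ0 : 0 < δ := by
            rw [hδ, norm_pos_iff, sub_ne_zero]
            intro heq
            -- then x0 ∈ F, so ‖P x0‖ ≤ S F P < S F P + ε ≤ ‖P x0‖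
            have hx0F : x0 ∈ F := ⟨heq, hx0C.1⟩
            have h1 : ‖MvPolynomial.eval x0 P‖ ≤ S F P := le_S_of_compact hX hFX hx0F
            have h2 := hx0C.2
            linarith
          exact ⟨δ, hδ0, fun x hx hlt => by
            by_contra hcon
            push_neg at hcon
            have hxC : x ∈ C := ⟨hx, le_of_lt hcon⟩
            have := hx0min hxC
            simp only [Set.mem_setOf_eq] at this
            exact absurd (lt_of_le_of_lt this hlt) (lt_irrefl _)⟩
      obtain ⟨δ, hδ0, hδ⟩ := hdelta
      set δ' := min δ B with hδ'
      have hδ'0 : 0 < δ' := lt_min hδ0 hB0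
      have hδ'B : δ' ≤ B := min_le_right _ _
      set β := B ^ 2 - δ' ^ 2 with hβ
      have hβ0 : 0 ≤ β := by nlinarith
      have hβlt : β < B ^ 2 := by nlinarith
      -- the auxiliary polynomial
      set R : MvPolynomial (Fin n) ℂ := f - MvPolynomial.C (t : ℂ) with hR
      set Q : MvPolynomial (Fin n) ℂ := MvPolynomial.C ((B ^ 2 : ℝ) : ℂ) - R ^ 2 with hQ
      have hevR : ∀ w, MvPolynomial.eval w R = MvPolynomial.eval w f - (t : ℂ) := by
        intro w; simp [hR]
      have hevQ : ∀ w, MvPolynomial.eval w Q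
          = ((B ^ 2 : ℝ) : ℂ) - (MvPolynomial.eval w f - (t : ℂ)) ^ 2 := by
        intro w; simp [hQ, hevR w]
      -- for x ∈ X, f x - t is a real number r with |r| ≤ M + |t| < B
      have hQreal : ∀ x ∈ X, ∃ r : ℝ, MvPolynomial.eval x f - (t : ℂ) = (r : ℂ) ∧
          MvPolynomial.eval x Q = ((B ^ 2 - r ^ 2 : ℝ) : ℂ) ∧ |r| < B ∧
          ‖MvPolynomial.eval x f - (t : ℂ)‖ = |r| := by
        intro x hx
        refine ⟨(MvPolynomial.eval x f).re - t, ?_, ?_, ?_, ?_⟩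
        · apply Complex.ext <;> simp [hreal x hx]
        · rw [hevQ x]
          have : MvPolynomial.eval x f - (t : ℂ) = (((MvPolynomial.eval x f).re - t : ℝ) : ℂ) := by
            apply Complex.ext <;> simp [hreal x hx]
          rw [this]
          push_cast
          ring
        · have h1 : ‖MvPolynomial.eval x f - (t : ℂ)‖ ≤ M + |t| := hRbound x hx
          have h2 : MvPolynomial.eval x f - (t : ℂ) = (((MvPolynomial.eval x f).re - t : ℝ) : ℂ) := by
            apply Complex.ext <;> simp [hreal x hx]
          rw [h2] at h1
          simp only [Complex.norm_real] at h1
          calc |(MvPolynomial.eval x f).re - t| ≤ M + |t| := h1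
            _ < B := by rw [hB]; linarith
        · have h2 : MvPolynomial.eval x f - (t : ℂ) = (((MvPolynomial.eval x f).re - t : ℝ) : ℂ) := by
            apply Complex.ext <;> simp [hreal x hx]
          rw [h2, Complex.norm_real]
          exact Real.norm_eq_abs _
      -- choose k with Cp' * β^k ≤ (S F P + ε) * (B^2)^k
      have hSF0 : 0 < S F P + ε := lt_of_lt_of_le hε (by linarith [S_nonneg F P])
      have hratio : β / B ^ 2 < 1 := by
        rw [div_lt_one (by positivity)]; exact hβlt
      have hratio0 : 0 ≤ β / B ^ 2 := by positivity
      obtain ⟨k, hk⟩ := exists_pow_lt_of_lt_one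
        (show (0:ℝ) < (S F P + ε) / (Cp' + 1) by positivity) hratio
      have hkey : Cp' * β ^ k ≤ (S F P + ε) * (B ^ 2) ^ k := by
        have hBk : (0:ℝ) < (B ^ 2) ^ k := by positivity
        have h1 : β ^ k = (β / B ^ 2) ^ k * (B ^ 2) ^ k := by
          rw [div_pow]; field_simp
        rw [h1, ← mul_assoc]
        have h2 : Cp' * (β / B ^ 2) ^ k ≤ S F P + ε := by
          have := mul_le_mul_of_nonneg_left (le_of_lt hk) hCp'0
          calc Cp' * (β / B ^ 2) ^ k ≤ Cp' * ((S F P + ε) / (Cp' + 1)) := this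
            _ ≤ S F P + ε := by
                rw [mul_div_assoc']
                rw [div_le_iff₀ (by positivity)]
                nlinarith
        exact mul_le_mul_of_nonneg_right h2 (le_of_lt hBk)
      -- main estimate via P * Q^k
      have hmain : ‖MvPolynomial.eval z (P * Q ^ k)‖ ≤ S X (P * Q ^ k) := hz _
      have hSbound : S X (P * Q ^ k) ≤ (S F P + ε) * (B ^ 2) ^ k := by
        refine S_le (fun x hx => ?_) (by positivity)
        obtain ⟨r, hr1, hr2, hr3, hr4⟩ := hQreal x hx
        have hevPQ : ‖MvPolynomial.eval x (P * Q ^ k)‖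
            = ‖MvPolynomial.eval x P‖ * |B ^ 2 - r ^ 2| ^ k := by
          rw [map_mul, map_pow, norm_mul, norm_pow, hr2, Complex.norm_real]
          rfl
        have hQnn : 0 ≤ B ^ 2 - r ^ 2 := by
          have hrB : r ^ 2 ≤ B ^ 2 := by
            rw [← _root_.sq_abs r]
            exact pow_le_pow_left₀ (abs_nonneg r) (le_of_lt hr3) 2
          linarith
        have habs : |B ^ 2 - r ^ 2| = B ^ 2 - r ^ 2 := abs_of_nonneg hQnn
        rw [hevPQ, habs]
        by_cases hcase : ‖MvPolynomial.eval x f - (t : ℂ)‖ < δ'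
        · have h1 : ‖MvPolynomial.eval x P‖ ≤ S F P + ε :=
            hδ x hx (lt_of_lt_of_le hcase (min_le_left _ _))
          have h2 : (B ^ 2 - r ^ 2) ^ k ≤ (B ^ 2) ^ k :=
            pow_le_pow_left₀ hQnn (sub_le_self _ (sq_nonneg r)) k
          exact mul_le_mul h1 h2 (by positivity) (le_of_lt hSF0)
        · push_neg at hcase
          rw [hr4] at hcase
          have h1 : B ^ 2 - r ^ 2 ≤ β := by
            rw [hβ]
            have : δ' ^ 2 ≤ r ^ 2 := by
              rw [← _root_.sq_abs r]
              exact pow_le_pow_left₀ (le_of_lt hδ'0) hcase 2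
            linarith
          have h2 : (B ^ 2 - r ^ 2) ^ k ≤ β ^ k := pow_le_pow_left₀ hQnn h1 k
          calc ‖MvPolynomial.eval x P‖ * (B ^ 2 - r ^ 2) ^ k
              ≤ Cp' * β ^ k := mul_le_mul (hCp0 x hx) h2 (by positivity) hCp'0
            _ ≤ (S F P + ε) * (B ^ 2) ^ k := hkey
      -- evaluate at z
      have hevz : ‖MvPolynomial.eval z (P * Q ^ k)‖
          = ‖MvPolynomial.eval z P‖ * (B ^ 2) ^ k := by
        rw [map_mul, map_pow, norm_mul, norm_pow]
        have : MvPolynomial.eval z Q = ((B ^ 2 : ℝ) : ℂ) := by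
          rw [hevQ z, hft]; ring
        rw [this]
        rw [Complex.norm_real, Real.norm_eq_abs,
          _root_.abs_of_nonneg (by positivity : (0:ℝ) ≤ B ^ 2)]
      rw [hevz] at hmain
      have hfin : ‖MvPolynomial.eval z P‖ * (B ^ 2) ^ k ≤ (S F P + ε) * (B ^ 2) ^ k :=
        hmain.trans hSbound
      have hBk : (0:ℝ) < (B ^ 2) ^ k := by positivity
      exact le_of_mul_le_mul_right hfin hBk
    · intro hzX P
      exact le_S_of_compact hX (le_refl X) hzX
end
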